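/- Let λ₂ ≤ λ₃ ≤ λ₄ ≤ λ₅ be nonnegative reals with λ₂+λ₃+λ₄+λ₅ = 3/2 and λ₂²+λ₃²+λ₄²+λ₅² = 3/4. Then Σ_{α=2}^{5} λ_α²(1/2−λ_α)² ≤ λ₂ [ λ₂(1/2−λ₂)² + (1−λ₂)(3/4−λ₂²) ]. -/
import Mathlib

/-- Σ_{α=2}^{5} λ_α²(1/2−λ_α)² ≤ λ₂[λ₂(1/2−λ₂)² + (1−λ₂)(3/4−λ₂²)]. -/
theorem stmt8 (l2 l3 l4 l5 : ℝ)
    (h2 : 0 ≤ l2) (h23 : l2 ≤ l3) (h34 : l3 ≤ l4) (h45 : l4 ≤ l5)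
    (hsum : l2 + l3 + l4 + l5 = 3 / 2)
    (hsq : l2 ^ 2 + l3 ^ 2 + l4 ^ 2 + l5 ^ 2 = 3 / 4) :
    l2 ^ 2 * (1 / 2 - l2) ^ 2 + l3 ^ 2 * (1 / 2 - l3) ^ 2
      + l4 ^ 2 * (1 / 2 - l4) ^ 2 + l5 ^ 2 * (1 / 2 - l5) ^ 2
    ≤ l2 * (l2 * (1 / 2 - l2) ^ 2 + (1 - l2) * (3 / 4 - l2 ^ 2)) := by
  have k3 : l2 * (1 - l2) - (1 / 2 - l3) ^ 2 ≥ 0 := by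
    nlinarith [sq_nonneg (l4 - 1 / 2), sq_nonneg (l5 - 1 / 2)]
  have k4 : l2 * (1 - l2) - (1 / 2 - l4) ^ 2 ≥ 0 := by
    nlinarith [sq_nonneg (l3 - 1 / 2), sq_nonneg (l5 - 1 / 2)]
  have k5 : l2 * (1 - l2) - (1 / 2 - l5) ^ 2 ≥ 0 := by
    nlinarith [sq_nonneg (l3 - 1 / 2), sq_nonneg (l4 - 1 / 2)]
  have hm : l2 * (1 - l2) * (l2 ^ 2 + l3 ^ 2 + l4 ^ 2 + l5 ^ 2)
      = l2 * (1 - l2) * (3 / 4) := by rw [hsq]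
  nlinarith [mul_nonneg (sq_nonneg l3) k3, mul_nonneg (sq_nonneg l4) k4,
    mul_nonneg (sq_nonneg l5) k5, hm]
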